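/- arXiv:2503.03757 — 5 statements merged into one kernel-verified Lean document; each statement's English description precedes it below -/
import Mathlib

section
/- The function u_{0110}(x,t) = e^{−2it} (1 − 1/(x + 2it)) satisfies the nonlocal NLS equation i u_t(x,t) = u_xx(x,t) + 2 u(x,t)^2 u*(−x,t) at every real point (x,t) ≠ (0,0). -/
open scoped BigOperators

/-- Schur polynomials with values in a commutative `ℂ`-algebra, defined by the explicit
partition-sum formula `S_k(x) = Σ_{l₁+2l₂+⋯+k·l_k = k} ∏_{i=1}^k x_i^{l_i}/l_i!`
coming from the generating function `Σ_k S_k(x) ε^k = exp(Σ_{j≥1} x_j ε^j)`. -/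
noncomputable def schurA {A : Type*} [CommRing A] [Algebra ℂ A] (x : ℕ → A) (k : ℕ) : A :=
  ∑ l ∈ Finset.filter
      (fun l : Fin k → Fin (k + 1) => ∑ i : Fin k, ((i : ℕ) + 1) * (l i : ℕ) = k) Finset.univ,
    ∏ i : Fin k,
      algebraMap ℂ A (((l i : ℕ).factorial : ℂ))⁻¹ * x ((i : ℕ) + 1) ^ (l i : ℕ)

/-- The complex-valued Schur polynomial `S_k(x)`. -/
noncomputable def schurC (x : ℕ → ℂ) (k : ℕ) : ℂ := schurA x k

/-- Schur polynomial with integer index, with the convention `S_k ≡ 0` for `k < 0`. -/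
noncomputable def schurZ (x : ℕ → ℂ) (k : ℤ) : ℂ := if 0 ≤ k then schurC x k.toNat else 0

/-- The function `λ ↦ ln((2/λ) tanh(λ/2))`, extended by the value `0` at `λ = 0`. -/
noncomputable def fS (lam : ℂ) : ℂ :=
  if lam = 0 then 0 else Complex.log (2 / lam * Complex.tanh (lam / 2))

/-- The Taylor coefficients `s_k` of `ln((2/λ) tanh(λ/2))` at `λ = 0`. -/
noncomputable def sCoeff (k : ℕ) : ℂ := iteratedDeriv k fS 0 / (k.factorial : ℂ)

/-- The sequence `x⁺(n) = (x₁⁺, 0, x₃⁺, 0, …)` with `x₁⁺(n) = x - 2it + n + a₁` and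
`x⁺_{2k+1} = (x - 2^{2k+1} i t)/(2k+1)! + a_{2k+1}`. -/
noncomputable def xPlus (a : ℕ → ℂ) (x t : ℝ) (n : ℕ) : ℕ → ℂ := fun m =>
  if m = 1 then (x : ℂ) - 2 * Complex.I * (t : ℂ) + (n : ℂ) + a 1
  else if m % 2 = 1 then ((x : ℂ) - 2 ^ m * Complex.I * (t : ℂ)) / (m.factorial : ℂ) + a m
  else 0

/-- The sequence `x⁻(n) = (x₁⁻, 0, x₃⁻, 0, …)` with `x₁⁻(n) = x + 2it - n + b₁` and
`x⁻_{2k+1} = (x + 2^{2k+1} i t)/(2k+1)! + b_{2k+1}`. -/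
noncomputable def xMinus (b : ℕ → ℂ) (x t : ℝ) (n : ℕ) : ℕ → ℂ := fun m =>
  if m = 1 then (x : ℂ) + 2 * Complex.I * (t : ℂ) - (n : ℂ) + b 1
  else if m % 2 = 1 then ((x : ℂ) + 2 ^ m * Complex.I * (t : ℂ)) / (m.factorial : ℂ) + b m
  else 0

/-- The matrix element `m_{i,j} = Σ_{v=0}^{min(i,j)} 4^{-v} S_{i-v}(x⁺ + v s) S_{j-v}(x⁻ + v s)`. -/
noncomputable def mGen (xp xm s : ℕ → ℂ) (i j : ℕ) : ℂ :=
  ∑ v ∈ Finset.range (min i j + 1),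
    ((4 : ℂ) ^ v)⁻¹ * schurC (fun m => xp m + (v : ℂ) * s m) (i - v) *
      schurC (fun m => xm m + (v : ℂ) * s m) (j - v)

/-- The τ-function `σ_n`: determinant of the 2×2 block matrix with blocks
`Γ_{i,j}^{(n)} = (m_{2k-i,2l-j}^{(n)})`. -/
noncomputable def sigmaTau (N₁ N₂ M₁ M₂ : ℕ) (a b : ℕ → ℂ) (n : ℕ) (x t : ℝ) : ℂ :=
  Matrix.det (Matrix.of fun r c : Fin (N₁ + N₂) =>
    mGen (xPlus a x t n) (xMinus b x t n) sCoeff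
      (if (r : ℕ) < N₁ then 2 * (r : ℕ) + 1 else 2 * ((r : ℕ) - N₁))
      (if (c : ℕ) < M₁ then 2 * (c : ℕ) + 1 else 2 * ((c : ℕ) - M₁)))

/-- The rational solution `u_{N₁,N₂,M₁,M₂}(x,t) = e^{-2it} σ₁/σ₀`. -/
noncomputable def uSol (N₁ N₂ M₁ M₂ : ℕ) (a b : ℕ → ℂ) (x t : ℝ) : ℂ :=
  Complex.exp (-2 * Complex.I * (t : ℂ)) *
    sigmaTau N₁ N₂ M₁ M₂ a b 1 x t / sigmaTau N₁ N₂ M₁ M₂ a b 0 x t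

/-- The nonlocal NLS equation `i u_t(x,t) = u_xx(x,t) + 2 u(x,t)² u*(-x,t)` at the point `(x,t)`. -/
def nlnls (u : ℝ → ℝ → ℂ) (x t : ℝ) : Prop :=
  Complex.I * deriv (fun s : ℝ => u x s) t =
    deriv (fun y : ℝ => deriv (fun w : ℝ => u w t) y) x +
      2 * u x t ^ 2 * (starRingEnd ℂ) (u (-x) t)

/-- `u_{0110}(x,t) = e^{-2it}(1 - 1/(x + 2it))`. -/
noncomputable def u0110 (x t : ℝ) : ℂ :=
  Complex.exp (-2 * Complex.I * (t : ℂ)) * (1 - 1 / ((x : ℂ) + 2 * Complex.I * (t : ℂ)))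

/-- `u_{1001}(x,t) = e^{-2it}(1 + 1/(x - 2it))`. -/
noncomputable def u1001 (x t : ℝ) : ℂ :=
  Complex.exp (-2 * Complex.I * (t : ℂ)) * (1 + 1 / ((x : ℂ) - 2 * Complex.I * (t : ℂ)))

/-- `u_{1010}(x,t) = e^{-2it}(1 + (16it - 4)/(16t² + 4x² + 1))`. -/
noncomputable def u1010 (x t : ℝ) : ℂ :=
  Complex.exp (-2 * Complex.I * (t : ℂ)) *
    (1 + (16 * Complex.I * (t : ℂ) - 4) / (16 * (t : ℂ) ^ 2 + 4 * (x : ℂ) ^ 2 + 1))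

/-- The sequence `(z, 0, κ₁, 0, κ₂, 0, …)`: entry `1` is `z`, entry `2j+1` is `κ_j` for `j ≥ 1`,
even entries vanish.  Feeding it to Schur polynomials realises the generating function
`Σ_k θ_k(z) ε^k = exp(zε + Σ_{j≥1} κ_j ε^{2j+1})`. -/
noncomputable def thetaSeq (κ : ℕ → ℂ) (z : ℂ) : ℕ → ℂ := fun m =>
  if m = 1 then z else if m % 2 = 1 ∧ 3 ≤ m then κ ((m - 1) / 2) else 0

/-- The polynomials `θ_k(z)` of the Adler–Moser construction, as functions of `z`. -/
noncomputable def thetaFun (κ : ℕ → ℂ) (k : ℕ) : ℂ → ℂ := fun z => schurC (thetaSeq κ z) k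

/-- `θ_k(z)` with integer index, with `θ_k ≡ 0` for `k < 0`. -/
noncomputable def thetaFunZ (κ : ℕ → ℂ) (k : ℤ) : ℂ → ℂ := fun z =>
  if 0 ≤ k then thetaFun κ k.toNat z else 0

/-- `c_N = ∏_{j=1}^N (2j-1)!!`. -/
def cDF (N : ℕ) : ℕ := ∏ j ∈ Finset.range N, Nat.doubleFactorial (2 * j + 1)

/-- The Adler–Moser polynomial `Θ_N(z) = c_N det_{1≤i,j≤N}[θ_{2i-j}(z)]`, as a function of `z`. -/
noncomputable def adlerMoserFun (κ : ℕ → ℂ) (N : ℕ) (z : ℂ) : ℂ :=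
  (cDF N : ℂ) * Matrix.det (Matrix.of fun i j : Fin N =>
    thetaFunZ κ (2 * (i : ℤ) + 1 - (j : ℤ)) z)

/-- `θ_k` as an element of `Polynomial ℂ`. -/
noncomputable def thetaPoly (κ : ℕ → ℂ) (k : ℕ) : Polynomial ℂ :=
  schurA (fun m => if m = 1 then Polynomial.X
    else if m % 2 = 1 ∧ 3 ≤ m then Polynomial.C (κ ((m - 1) / 2)) else 0) k

/-- `θ_k` as a polynomial, with integer index and `θ_k ≡ 0` for `k < 0`. -/
noncomputable def thetaPolyZ (κ : ℕ → ℂ) (k : ℤ) : Polynomial ℂ :=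
  if 0 ≤ k then thetaPoly κ k.toNat else 0

/-- The Adler–Moser polynomial `Θ_N = c_N det[θ_{2i-j}]` as an element of `Polynomial ℂ`. -/
noncomputable def adlerMoserPoly (κ : ℕ → ℂ) (N : ℕ) : Polynomial ℂ :=
  Polynomial.C ((cDF N : ℂ)) * Matrix.det (Matrix.of fun i j : Fin N =>
    thetaPolyZ κ (2 * (i : ℤ) + 1 - (j : ℤ)))

/-- `δ_N = N₁ - N₂` if `N₁ ≥ N₂`, and `N₂ - N₁ - 1` otherwise. -/
def deltaIdx (N₁ N₂ : ℕ) : ℕ := if N₂ ≤ N₁ then N₁ - N₂ else N₂ - N₁ - 1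

/-- The large-parameter scaling `a_{2j+1} = κ_j A^{2j+1}` (with `a₁ = 0` and even entries `0`). -/
noncomputable def paramSeq (κ : ℕ → ℂ) (A : ℝ) : ℕ → ℂ := fun m =>
  if m % 2 = 1 ∧ 3 ≤ m then κ ((m - 1) / 2) * (A : ℂ) ^ m else 0
lemma zNe (x t : ℝ) (h : (x, t) ≠ (0, 0)) : (x : ℂ) + 2 * Complex.I * (t : ℂ) ≠ 0 := by
  intro hz
  apply h
  have hre := congrArg Complex.re hz
  have him := congrArg Complex.im hz
  simp [Complex.add_re, Complex.add_im] at hre him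
  simp [hre, him]

lemma u0110_hasDerivAt_x (t y : ℝ) (hz : (y : ℂ) + 2 * Complex.I * (t : ℂ) ≠ 0) :
    HasDerivAt (fun w : ℝ => u0110 w t)
      (Complex.exp (-2 * Complex.I * (t : ℂ)) * (((y : ℂ) + 2 * Complex.I * (t : ℂ)) ^ 2)⁻¹) y := by
  have h1 : HasDerivAt (fun w : ℂ => w + 2 * Complex.I * (t : ℂ)) 1 (y : ℂ) :=
    (hasDerivAt_id _).add_const _
  have h2 := h1.inv hz
  have h3 := ((h2.const_sub (1 : ℂ)).const_mul
    (Complex.exp (-2 * Complex.I * (t : ℂ)))).comp_ofReal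
  have hfun : (fun w : ℝ => Complex.exp (-2 * Complex.I * (t : ℂ)) *
      (1 - ((w : ℂ) + 2 * Complex.I * (t : ℂ))⁻¹)) = fun w : ℝ => u0110 w t := by
    funext w; simp [u0110, one_div]
  simp only [Pi.inv_apply] at h3
  rw [hfun] at h3
  convert h3 using 1
  ring


/-- `u_{0110}(x,t) = e^{-2it}(1 - 1/(x+2it))` solves the nonlocal NLS equation
at every real point `(x,t) ≠ (0,0)`. -/
theorem u0110_solves_nonlocal_NLS (x t : ℝ) (h : (x, t) ≠ (0, 0)) :
    nlnls u0110 x t := by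

  have hz := zNe x t h
  set z : ℂ := (x : ℂ) + 2 * Complex.I * (t : ℂ) with hzdef
  set E : ℂ := Complex.exp (-2 * Complex.I * (t : ℂ)) with hEdef
  -- time derivative
  have ht : HasDerivAt (fun s : ℝ => u0110 x s)
      (E * (-2 * Complex.I) * (1 - z⁻¹) + E * (2 * Complex.I / z ^ 2)) t := by
    have h1 : HasDerivAt (fun s : ℂ => (x : ℂ) + 2 * Complex.I * s) (2 * Complex.I) (t : ℂ) := by
      simpa using ((hasDerivAt_id ((t : ℂ))).const_mul (2 * Complex.I)).const_add (x : ℂ)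
    have h2 := (h1.inv hz).const_sub (1 : ℂ)
    have h3 : HasDerivAt (fun s : ℂ => Complex.exp (-2 * Complex.I * s))
        (E * (-2 * Complex.I)) (t : ℂ) := by
      simpa [hEdef, mul_comm] using
        (((hasDerivAt_id ((t : ℂ))).const_mul (-2 * Complex.I)).cexp)
    have h4 := (h3.mul h2).comp_ofReal
    have hfun : (fun s : ℝ => Complex.exp (-2 * Complex.I * (s : ℂ)) *
        (1 - ((x : ℂ) + 2 * Complex.I * (s : ℂ))⁻¹)) = fun s : ℝ => u0110 x s := by
      funext s; simp [u0110, one_div]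
    simp only [Pi.mul_apply, Pi.inv_apply] at h4
    rw [hfun] at h4
    convert h4 using 1
    rw [hzdef]
    ring
  -- second space derivative
  have hxx : deriv (fun y : ℝ => deriv (fun w : ℝ => u0110 w t) y) x = E * (-2 / z ^ 3) := by
    have hopen : IsOpen {y : ℝ | (y : ℂ) + 2 * Complex.I * (t : ℂ) ≠ 0} := by
      have : Continuous fun y : ℝ => (y : ℂ) + 2 * Complex.I * (t : ℂ) := by continuity
      exact isOpen_ne.preimage this
    have hmem : {y : ℝ | (y : ℂ) + 2 * Complex.I * (t : ℂ) ≠ 0} ∈ nhds x :=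
      hopen.mem_nhds hz
    have heq : (fun y : ℝ => deriv (fun w : ℝ => u0110 w t) y) =ᶠ[nhds x]
        (fun y : ℝ => E * (((y : ℂ) + 2 * Complex.I * (t : ℂ)) ^ 2)⁻¹) := by
      filter_upwards [hmem] with y hy
      exact (u0110_hasDerivAt_x t y hy).deriv
    rw [heq.deriv_eq]
    have h1 : HasDerivAt (fun w : ℂ => w + 2 * Complex.I * (t : ℂ)) 1 (x : ℂ) :=
      (hasDerivAt_id _).add_const _
    have h2 : HasDerivAt (fun w : ℂ => (w + 2 * Complex.I * (t : ℂ)) ^ 2) (2 * z) (x : ℂ) := by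
      simpa [hzdef, Pi.pow_def] using h1.pow 2
    have hz2 : z ^ 2 ≠ 0 := pow_ne_zero _ hz
    have h4 := ((h2.inv hz2).const_mul E).comp_ofReal
    simp only [Pi.inv_apply] at h4
    rw [h4.deriv, hzdef]
    field_simp
  -- conjugate term
  have hconj : (starRingEnd ℂ) (u0110 (-x) t) =
      Complex.exp (2 * Complex.I * (t : ℂ)) * (1 + z⁻¹) := by
    rw [u0110, map_mul, ← Complex.exp_conj]
    congr 1
    · congr 1
      simp [Complex.conj_I, map_ofNat]
    · rw [map_sub, map_one, map_div₀, map_one]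
      have hc : (starRingEnd ℂ) (((-x : ℝ) : ℂ) + 2 * Complex.I * (t : ℂ)) = -z := by
        simp [Complex.conj_I, map_ofNat, hzdef]
        try ring
      rw [hc, one_div, inv_neg]
      ring
  have hE' : Complex.exp (2 * Complex.I * (t : ℂ)) = E⁻¹ := by
    apply eq_inv_of_mul_eq_one_left
    rw [hEdef, ← Complex.exp_add]
    simp
  have hEne : E ≠ 0 := Complex.exp_ne_zero _
  rw [nlnls, ht.deriv, hxx, hconj, hE', u0110,
    show (1 : ℂ) - 1 / ((x : ℂ) + 2 * Complex.I * (t : ℂ)) = 1 - z⁻¹ by rw [hzdef, one_div]]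
  have hL : Complex.I * (E * (-2 * Complex.I) * (1 - z⁻¹) + E * (2 * Complex.I / z ^ 2)) =
      E * (2 * (1 - z⁻¹) - 2 * (z ^ 2)⁻¹) := by
    linear_combination (-2 * E * (1 - z⁻¹) + 2 * E * (z ^ 2)⁻¹) * Complex.I_sq
  have hR : E * (-2 / z ^ 3) + 2 * (E * (1 - z⁻¹)) ^ 2 * (E⁻¹ * (1 + z⁻¹)) =
      E * (-2 / z ^ 3 + 2 * (1 - z⁻¹) ^ 2 * (1 + z⁻¹)) := by
    field_simp
  rw [hL, hR]
  congr 1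
  field_simp
  ring
end

section
/- The function u_{1001}(x,t) = e^{−2it} (1 + 1/(x − 2it)) satisfies the nonlocal NLS equation i u_t(x,t) = u_xx(x,t) + 2 u(x,t)^2 u*(−x,t) at every real point (x,t) ≠ (0,0). -/
open scoped BigOperators

/-- `u_{1001}(x,t) = e^{-2it}(1 + 1/(x-2it))` solves the nonlocal NLS equation
at every real point `(x,t) ≠ (0,0)`. -/
theorem u1001_solves_nonlocal_NLS (x t : ℝ) (h : (x, t) ≠ (0, 0)) :
    nlnls u1001 x t := by
  have hne : ∀ y s : ℝ, (y, s) ≠ ((0 : ℝ), (0 : ℝ)) → ((y : ℂ) - 2 * Complex.I * (s : ℂ)) ≠ 0 := by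
    intro y s hys h0
    apply hys
    have hre := congrArg Complex.re h0
    have him := congrArg Complex.im h0
    simp [Complex.ext_iff] at hre him
    simp [hre, him]
  have hz : ((x : ℂ) - 2 * Complex.I * (t : ℂ)) ≠ 0 := hne x t h
  set z : ℂ := (x : ℂ) - 2 * Complex.I * (t : ℂ) with hzdef
  set E : ℂ := Complex.exp (-2 * Complex.I * (t : ℂ)) with hEdef
  -- time derivative
  have hlin : HasDerivAt (fun w : ℂ => -2 * Complex.I * w) (-2 * Complex.I) (t : ℂ) := by
    simpa using (hasDerivAt_id (t : ℂ)).const_mul (-2 * Complex.I)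
  have hlin2 : HasDerivAt (fun w : ℂ => (x : ℂ) - 2 * Complex.I * w) (-(2 * Complex.I)) (t : ℂ) := by
    simpa using ((hasDerivAt_id (t : ℂ)).const_mul (2 * Complex.I)).const_sub (x : ℂ)
  have hT : HasDerivAt (fun s : ℝ => u1001 x s)
      (E * (-2 * Complex.I) * (1 + z⁻¹) + E * (-(-(2 * Complex.I)) / z ^ 2)) t := by
    have hexp : HasDerivAt (fun w : ℂ => Complex.exp (-2 * Complex.I * w))
        (Complex.exp (-2 * Complex.I * (t : ℂ)) * (-2 * Complex.I)) (t : ℂ) := hlin.cexp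
    have hinv : HasDerivAt (fun w : ℂ => (1 : ℂ) + ((x : ℂ) - 2 * Complex.I * w)⁻¹)
        (-(-(2 * Complex.I)) / z ^ 2) (t : ℂ) := (hlin2.inv hz).const_add 1
    have := (hexp.mul hinv).comp_ofReal
    simp only [u1001, one_div]
    exact this
  -- first x derivative, on a neighborhood
  have hX1 : ∀ y : ℝ, ((y : ℂ) - 2 * Complex.I * (t : ℂ)) ≠ 0 →
      HasDerivAt (fun w : ℝ => u1001 w t)
        (E * (-1 / ((y : ℂ) - 2 * Complex.I * (t : ℂ)) ^ 2)) y := by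
    intro y hy
    have hid : HasDerivAt (fun w : ℂ => w - 2 * Complex.I * (t : ℂ)) 1 (y : ℂ) :=
      (hasDerivAt_id (y : ℂ)).sub_const _
    have hinv : HasDerivAt (fun w : ℂ => (1 : ℂ) + (w - 2 * Complex.I * (t : ℂ))⁻¹)
        (-1 / ((y : ℂ) - 2 * Complex.I * (t : ℂ)) ^ 2) (y : ℂ) := (hid.inv hy).const_add 1
    have := (hinv.const_mul E).comp_ofReal
    simp only [u1001, one_div]
    exact this
  have hEvOpen : IsOpen {y : ℝ | ((y : ℂ) - 2 * Complex.I * (t : ℂ)) ≠ 0} := by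
    have : Continuous fun y : ℝ => (y : ℂ) - 2 * Complex.I * (t : ℂ) := by continuity
    exact isOpen_compl_singleton.preimage this
  have hEv : deriv (fun w : ℝ => u1001 w t) =ᶠ[nhds x]
      fun y : ℝ => E * (-1 / ((y : ℂ) - 2 * Complex.I * (t : ℂ)) ^ 2) := by
    filter_upwards [hEvOpen.mem_nhds hz] with y hy
    exact (hX1 y hy).deriv
  -- second x derivative
  have hX2 : HasDerivAt (fun y : ℝ => E * (-1 / ((y : ℂ) - 2 * Complex.I * (t : ℂ)) ^ 2))
      (E * (2 / z ^ 3)) x := by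
    have hid : HasDerivAt (fun w : ℂ => w - 2 * Complex.I * (t : ℂ)) 1 (x : ℂ) :=
      (hasDerivAt_id (x : ℂ)).sub_const _
    have hsq : HasDerivAt (fun w : ℂ => (w - 2 * Complex.I * (t : ℂ)) ^ 2)
        (2 * z ^ 1 * 1) (x : ℂ) := by
      have := hid.pow 2
      simp at this ⊢
      exact this
    have hz2 : z ^ 2 ≠ 0 := pow_ne_zero _ hz
    have hinv : HasDerivAt (fun w : ℂ => ((w - 2 * Complex.I * (t : ℂ)) ^ 2)⁻¹)
        (-(2 * z ^ 1 * 1) / (z ^ 2) ^ 2) (x : ℂ) := hsq.inv hz2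
    have this' := (hinv.const_mul (-E)).comp_ofReal
    have hfun : (fun y : ℝ => E * (-1 / ((y : ℂ) - 2 * Complex.I * (t : ℂ)) ^ 2))
        = fun y : ℝ => -E * (((y : ℂ) - 2 * Complex.I * (t : ℂ)) ^ 2)⁻¹ := by
      funext y; ring
    rw [hfun]
    convert this' using 1
    field_simp
  have hderiv2 : deriv (fun y : ℝ => deriv (fun w : ℝ => u1001 w t) y) x = E * (2 / z ^ 3) := by
    rw [hEv.deriv_eq]
    exact hX2.deriv
  unfold nlnls
  rw [hT.deriv, hderiv2]
  -- values
  have hx' : ((-x : ℝ) : ℂ) - 2 * Complex.I * (t : ℂ) ≠ 0 := by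
    apply hne
    simp only [ne_eq, Prod.mk.injEq, neg_eq_zero, not_and]
    intro hx0 ht0
    exact h (by simp [Prod.ext_iff, hx0, ht0])
  have hconj : (starRingEnd ℂ) (u1001 (-x) t)
      = Complex.exp (2 * Complex.I * (t : ℂ)) * (1 + (-z)⁻¹) := by
    simp only [u1001, map_mul, map_add, map_one, map_div₀, ← Complex.exp_conj, map_inv₀, map_sub,
      map_ofNat, Complex.conj_I, Complex.conj_ofReal, map_neg, one_div, Complex.ofReal_neg]
    ring_nf
    have hz' : Complex.I * (t : ℂ) * 2 - (x : ℂ) = -z := by rw [hzdef]; ring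
    rw [hz', inv_neg]
    ring
  rw [hconj]
  have hu : u1001 x t = E * (1 + z⁻¹) := by rw [hzdef, hEdef]; simp [u1001, one_div]
  rw [hu]
  have hEmul : E * Complex.exp (2 * Complex.I * (t : ℂ)) = 1 := by
    rw [hEdef, ← Complex.exp_add]; ring_nf; exact Complex.exp_zero
  have hEne : E ≠ 0 := Complex.exp_ne_zero _
  have hE2 : Complex.exp (2 * Complex.I * (t : ℂ)) = E⁻¹ := eq_inv_of_mul_eq_one_right hEmul
  rw [hE2]
  clear_value z E
  have hL : Complex.I * (E * (-2 * Complex.I) * (1 + z⁻¹) + E * (- -(2 * Complex.I) / z ^ 2))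
      = 2 * E * (1 + z⁻¹) - 2 * E / z ^ 2 := by
    linear_combination (-2 * E * (1 + z⁻¹) + 2 * E / z ^ 2) * Complex.I_sq
  rw [hL]
  simp only [inv_neg]
  field_simp
  ring
end

section
/- The function u_{1010}(x,t) = e^{−2it} (1 + (16it − 4)/(16t^2 + 4x^2 + 1)) satisfies the nonlocal NLS equation i u_t(x,t) = u_xx(x,t) + 2 u(x,t)^2 u*(−x,t) at every real point (x,t). -/
open scoped BigOperators

lemma denom_ne (x t : ℝ) : (16 * (t : ℂ) ^ 2 + 4 * (x : ℂ) ^ 2 + 1) ≠ 0 := by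
  have h : (0:ℝ) < 16 * t ^ 2 + 4 * x ^ 2 + 1 := by positivity
  intro hc
  have h2 : ((16 * t ^ 2 + 4 * x ^ 2 + 1 : ℝ) : ℂ) = 0 := by push_cast; linear_combination hc
  exact (ne_of_gt h) (Complex.ofReal_eq_zero.mp h2)

/-- derivative in x of u1010, as a complex function -/
lemma hasDeriv_inner (t : ℝ) (y : ℝ) :
    HasDerivAt (fun w : ℝ => u1010 w t)
      (Complex.exp (-2 * Complex.I * (t : ℂ)) *
        (-(16 * Complex.I * (t : ℂ) - 4) * (8 * (y : ℂ)) /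
          (16 * (t : ℂ) ^ 2 + 4 * (y : ℂ) ^ 2 + 1) ^ 2)) y := by
  have hD : ∀ z : ℂ, HasDerivAt (fun z : ℂ => 16 * (t : ℂ) ^ 2 + 4 * z ^ 2 + 1) (8 * z) z := by
    intro z
    have h := ((((hasDerivAt_pow 2 z).const_mul 4).const_add (16 * (t : ℂ) ^ 2)).add_const 1)
    refine h.congr_deriv ?_
    push_cast
    ring
  have hfrac : HasDerivAt (fun z : ℂ => 1 + (16 * Complex.I * (t : ℂ) - 4) /
      (16 * (t : ℂ) ^ 2 + 4 * z ^ 2 + 1))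
      (-(16 * Complex.I * (t : ℂ) - 4) * (8 * (y : ℂ)) /
        (16 * (t : ℂ) ^ 2 + 4 * (y : ℂ) ^ 2 + 1) ^ 2) (y : ℂ) := by
    have h1 := ((hasDerivAt_const ((y:ℂ)) (16 * Complex.I * (t : ℂ) - 4)).div (hD y)
      (denom_ne y t))
    have := h1.const_add 1
    refine this.congr_deriv ?_
    field_simp
    ring
  have := (hfrac.const_mul (Complex.exp (-2 * Complex.I * (t : ℂ)))).comp_ofReal
  simpa [u1010, mul_div_assoc] using this

/-- second derivative in x -/
lemma hasDeriv_inner2 (t x : ℝ) :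
    HasDerivAt (fun y : ℝ =>
      Complex.exp (-2 * Complex.I * (t : ℂ)) *
        (-(16 * Complex.I * (t : ℂ) - 4) * (8 * (y : ℂ)) /
          (16 * (t : ℂ) ^ 2 + 4 * (y : ℂ) ^ 2 + 1) ^ 2))
      (Complex.exp (-2 * Complex.I * (t : ℂ)) *
        ((-(16 * Complex.I * (t : ℂ) - 4) * 8 *
            ((16 * (t : ℂ) ^ 2 + 4 * (x : ℂ) ^ 2 + 1) - 16 * (x : ℂ) ^ 2)) /
          (16 * (t : ℂ) ^ 2 + 4 * (x : ℂ) ^ 2 + 1) ^ 3)) x := by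
  set c : ℂ := -(16 * Complex.I * (t : ℂ) - 4) with hc
  have hDz : ∀ z : ℂ, HasDerivAt (fun z : ℂ => 16 * (t : ℂ) ^ 2 + 4 * z ^ 2 + 1) (8 * z) z := by
    intro z
    have h := ((((hasDerivAt_pow 2 z).const_mul 4).const_add (16 * (t : ℂ) ^ 2)).add_const 1)
    refine h.congr_deriv ?_
    push_cast
    ring
  have hnum : HasDerivAt (fun z : ℂ => c * (8 * z)) (c * 8) (x : ℂ) := by
    simpa [mul_assoc] using ((hasDerivAt_id (x : ℂ)).const_mul (c * 8))
  have hden : HasDerivAt (fun z : ℂ => (16 * (t : ℂ) ^ 2 + 4 * z ^ 2 + 1) ^ 2)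
      (2 * (16 * (t : ℂ) ^ 2 + 4 * (x : ℂ) ^ 2 + 1) * (8 * (x : ℂ))) (x : ℂ) := by
    have := ((hDz (x : ℂ)).pow 2)
    exact this.congr_deriv (by norm_num)
  have hdenne : ((16 * (t : ℂ) ^ 2 + 4 * (x : ℂ) ^ 2 + 1) ^ 2) ≠ 0 :=
    pow_ne_zero _ (denom_ne x t)
  have hdiv := (hnum.div hden hdenne)
  have := (hdiv.const_mul (Complex.exp (-2 * Complex.I * (t : ℂ)))).comp_ofReal
  refine this.congr_deriv ?_
  have hD := denom_ne x t
  field_simp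
  ring

/-- derivative in t -/
lemma hasDeriv_t (x t : ℝ) :
    HasDerivAt (fun s : ℝ => u1010 x s)
      (Complex.exp (-2 * Complex.I * (t : ℂ)) *
        ((-2 * Complex.I) * (1 + (16 * Complex.I * (t : ℂ) - 4) /
            (16 * (t : ℂ) ^ 2 + 4 * (x : ℂ) ^ 2 + 1)) +
          (16 * Complex.I * (16 * (t : ℂ) ^ 2 + 4 * (x : ℂ) ^ 2 + 1) -
              (16 * Complex.I * (t : ℂ) - 4) * (32 * (t : ℂ))) /
            (16 * (t : ℂ) ^ 2 + 4 * (x : ℂ) ^ 2 + 1) ^ 2)) t := by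
  have hexp : HasDerivAt (fun z : ℂ => Complex.exp (-2 * Complex.I * z))
      ((-2 * Complex.I) * Complex.exp (-2 * Complex.I * (t : ℂ))) (t : ℂ) := by
    have hlin : HasDerivAt (fun z : ℂ => -2 * Complex.I * z) (-2 * Complex.I) (t : ℂ) := by
      simpa using (hasDerivAt_id ((t : ℂ))).const_mul (-2 * Complex.I)
    simpa [Function.comp_def, mul_comm] using (Complex.hasDerivAt_exp (-2 * Complex.I * (t : ℂ))).comp _ hlin
  have hnum : HasDerivAt (fun z : ℂ => 16 * Complex.I * z - 4) (16 * Complex.I) (t : ℂ) := by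
    simpa using ((hasDerivAt_id ((t : ℂ))).const_mul (16 * Complex.I)).sub_const 4
  have hden : HasDerivAt (fun z : ℂ => 16 * z ^ 2 + 4 * (x : ℂ) ^ 2 + 1) (32 * (t : ℂ)) (t : ℂ) := by
    have h := ((((hasDerivAt_pow 2 (t : ℂ)).const_mul 16).add_const (4 * (x : ℂ) ^ 2)).add_const 1)
    refine h.congr_deriv ?_
    push_cast
    ring
  have hdenne : (16 * (t : ℂ) ^ 2 + 4 * (x : ℂ) ^ 2 + 1) ≠ 0 := denom_ne x t
  have hdenne' : (16 * (t : ℂ) ^ 2 + 4 * (x : ℂ) ^ 2 + 1 : ℂ) =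
      16 * (t : ℂ) ^ 2 + 4 * (x : ℂ) ^ 2 + 1 := rfl
  have hfrac := (hnum.div hden (by simpa using hdenne)).const_add 1
  have hprod := hexp.mul hfrac
  have := hprod.comp_ofReal
  refine this.congr_deriv ?_
  simp only [Pi.div_apply]
  ring


set_option maxHeartbeats 2000000 in
/-- `u_{1010}(x,t) = e^{-2it}(1 + (16it-4)/(16t²+4x²+1))` solves the nonlocal
NLS equation at every real point `(x,t)`. -/
theorem u1010_solves_nonlocal_NLS (x t : ℝ) :
    nlnls u1010 x t := by
  unfold nlnls
  rw [(hasDeriv_t x t).deriv]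
  have hfun : (fun y : ℝ => deriv (fun w : ℝ => u1010 w t) y) =
      (fun y : ℝ => Complex.exp (-2 * Complex.I * (t : ℂ)) *
        (-(16 * Complex.I * (t : ℂ) - 4) * (8 * (y : ℂ)) /
          (16 * (t : ℂ) ^ 2 + 4 * (y : ℂ) ^ 2 + 1) ^ 2)) :=
    funext fun y => (hasDeriv_inner t y).deriv
  rw [hfun, (hasDeriv_inner2 t x).deriv]
  have hconj : (starRingEnd ℂ) (u1010 (-x) t) =
      Complex.exp (2 * Complex.I * (t : ℂ)) *
        (1 + (-(16 * Complex.I * (t : ℂ)) - 4) / (16 * (t : ℂ) ^ 2 + 4 * (x : ℂ) ^ 2 + 1)) := by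
    rw [u1010, map_mul, map_add, map_div₀, ← Complex.exp_conj]
    push_cast
    rw [map_mul, map_mul]
    simp only [map_add, map_sub, map_mul, map_one, map_ofNat, Complex.conj_I,
      Complex.conj_ofReal, map_pow, map_neg]
    ring_nf
  rw [u1010, hconj]
  have hE : Complex.exp (-2 * Complex.I * (t : ℂ)) ≠ 0 := Complex.exp_ne_zero _
  have hE2 : Complex.exp (2 * Complex.I * (t : ℂ)) =
      (Complex.exp (-2 * Complex.I * (t : ℂ)))⁻¹ := by
    rw [← Complex.exp_neg]; ring_nf
  rw [hE2]
  have hD := denom_ne x t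
  have h2 : Complex.I ^ 2 = -1 := Complex.I_sq
  have h3 : Complex.I ^ 3 = -Complex.I := by rw [pow_succ, h2]; ring
  have h4 : Complex.I ^ 4 = 1 := by rw [pow_succ, h3]; simp [Complex.I_mul_I]
  have h5 : Complex.I ^ 5 = Complex.I := by rw [pow_succ, h4]; ring
  have h6 : Complex.I ^ 6 = -1 := by rw [pow_succ, h5]; simp [Complex.I_mul_I]
  generalize Complex.exp (-2 * Complex.I * (t : ℂ)) = E at hE ⊢
  field_simp
  ring_nf
  simp only [h2, h3, h4, h5, h6]
  ring_nf
end

section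
/- For every N ≥ 1 and any choice of the complex constants κ_j, the Adler–Moser polynomial Θ_N(z) is a monic polynomial in z of degree N(N+1)/2. -/
open scoped BigOperators

section AMaux
open Polynomial Finset
open scoped Nat


lemma keyNat : ∀ n : ℕ, (∏ j ∈ Finset.range (n+1), Nat.doubleFactorial (2 * j + 1)) *
    (2 ^ (∑ i ∈ Finset.range (n+1), i) * Nat.superFactorial n) =
    ∏ i ∈ Finset.range (n+1), (2 * i + 1).factorial
  | 0 => rfl
  | (n+1) => by
    have h : (2*(n+1)+1).factorial
        = Nat.doubleFactorial (2*(n+1)+1) * (2^(n+1) * (n+1).factorial) := by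
      rw [← Nat.doubleFactorial_two_mul]
      exact Nat.factorial_eq_mul_doubleFactorial (2*(n+1))
    rw [Finset.prod_range_succ (fun i => (2*i+1).factorial), ← keyNat n,
      Finset.prod_range_succ (fun j => Nat.doubleFactorial (2*j+1)),
      Finset.sum_range_succ, Nat.superFactorial_succ, h, pow_add]
    ring

lemma coeff_mul_of_le (p q : Polynomial ℂ) (m k : ℕ) (hp : p.natDegree ≤ m) (hq : q.natDegree ≤ k) :
    (p * q).coeff (m + k) = p.coeff m * q.coeff k := by
  rcases lt_or_eq_of_le hp with h | h
  · rw [Polynomial.coeff_eq_zero_of_natDegree_lt h,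
      Polynomial.coeff_eq_zero_of_natDegree_lt (lt_of_le_of_lt Polynomial.natDegree_mul_le
        (by omega : p.natDegree + q.natDegree < m + k)), zero_mul]
  · rcases lt_or_eq_of_le hq with h2 | h2
    · rw [Polynomial.coeff_eq_zero_of_natDegree_lt h2,
        Polynomial.coeff_eq_zero_of_natDegree_lt (lt_of_le_of_lt Polynomial.natDegree_mul_le
          (by omega : p.natDegree + q.natDegree < m + k)), mul_zero]
    · subst h h2; exact Polynomial.coeff_mul_degree_add_degree p q

lemma coeff_prod_varying {ι : Type*} [DecidableEq ι] (s : Finset ι) (f : ι → Polynomial ℂ)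
    (d : ι → ℕ) (h : ∀ i ∈ s, (f i).natDegree ≤ d i) :
    (∏ i ∈ s, f i).coeff (∑ i ∈ s, d i) = ∏ i ∈ s, (f i).coeff (d i) := by
  induction s using Finset.induction with
  | empty => simp
  | @insert a s ha ih =>
    rw [Finset.prod_insert ha, Finset.sum_insert ha, Finset.prod_insert ha,
      coeff_mul_of_le _ _ _ _ (h a (Finset.mem_insert_self a s))
        ((Polynomial.natDegree_prod_le s f).trans
          (Finset.sum_le_sum fun i hi => h i (Finset.mem_insert_of_mem hi))),
      ih (fun i hi => h i (Finset.mem_insert_of_mem hi))]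

lemma xseq_natDegree (κ : ℕ → ℂ) (m : ℕ) :
    ((if m = 1 then Polynomial.X
      else if m % 2 = 1 ∧ 3 ≤ m then Polynomial.C (κ ((m - 1) / 2)) else 0 : Polynomial ℂ)).natDegree ≤ 1 := by
  split_ifs <;> simp

lemma term_deg (κ : ℕ → ℂ) (k : ℕ) (l : Fin k → Fin (k+1)) :
    (∏ i : Fin k, algebraMap ℂ (Polynomial ℂ) (((l i : ℕ).factorial : ℂ))⁻¹ *
      (if (i : ℕ) + 1 = 1 then Polynomial.X
        else if ((i : ℕ) + 1) % 2 = 1 ∧ 3 ≤ (i : ℕ) + 1 then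
          Polynomial.C (κ (((i : ℕ) + 1 - 1) / 2)) else 0) ^ (l i : ℕ)).natDegree
      ≤ ∑ i : Fin k, (l i : ℕ) := by
  refine (Polynomial.natDegree_prod_le _ _).trans (Finset.sum_le_sum fun i _ => ?_)
  refine Polynomial.natDegree_mul_le.trans ?_
  rw [Polynomial.algebraMap_eq, Polynomial.natDegree_C, zero_add]
  refine (Polynomial.natDegree_pow_le).trans ?_
  have := xseq_natDegree κ ((i : ℕ) + 1)
  calc (l i : ℕ) * Polynomial.natDegree _ ≤ (l i : ℕ) * 1 := Nat.mul_le_mul_left _ this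
    _ = (l i : ℕ) := Nat.mul_one _

lemma thetaPoly_natDegree_le (κ : ℕ → ℂ) (k : ℕ) : (thetaPoly κ k).natDegree ≤ k := by
  refine Polynomial.natDegree_sum_le_of_forall_le _ _ fun l hl => ?_
  rw [Finset.mem_filter] at hl
  refine (term_deg κ k l).trans ?_
  calc ∑ i : Fin k, (l i : ℕ) ≤ ∑ i : Fin k, ((i : ℕ) + 1) * (l i : ℕ) :=
        Finset.sum_le_sum fun i _ => Nat.le_mul_of_pos_left _ (Nat.succ_pos _)
    _ = k := hl.2

lemma thetaPoly_coeff (κ : ℕ → ℂ) (k : ℕ) :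
    (thetaPoly κ k).coeff k = ((k.factorial : ℂ))⁻¹ := by
  rcases Nat.eq_zero_or_pos k with hk | hk
  · subst hk
    simp [thetaPoly, schurA, Finset.filter_true_of_mem]
  set l₀ : Fin k → Fin (k+1) := fun i => if (i : ℕ) = 0 then ⟨k, k.lt_succ_self⟩ else ⟨0, Nat.succ_pos k⟩ with hl₀
  have hi₀ : (⟨0, hk⟩ : Fin k) ∈ (Finset.univ : Finset (Fin k)) := Finset.mem_univ _
  have hmem : l₀ ∈ Finset.filter
      (fun l : Fin k → Fin (k + 1) => ∑ i : Fin k, ((i : ℕ) + 1) * (l i : ℕ) = k) Finset.univ := by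
    rw [Finset.mem_filter]
    refine ⟨Finset.mem_univ _, ?_⟩
    rw [Finset.sum_eq_single (⟨0, hk⟩ : Fin k)]
    · simp [hl₀]
    · intro b _ hb
      have : (b : ℕ) ≠ 0 := fun h => hb (Fin.ext h)
      simp [hl₀, this]
    · intro h; exact absurd hi₀ h
  rw [thetaPoly, schurA, Polynomial.finset_sum_coeff,
    Finset.sum_eq_single_of_mem l₀ hmem]
  · -- value at l₀
    rw [Finset.prod_eq_single_of_mem (⟨0, hk⟩ : Fin k) hi₀]
    · have h0 : ((⟨0, hk⟩ : Fin k) : ℕ) = 0 := rfl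
      simp only [h0, hl₀, if_pos rfl, zero_add, if_pos rfl]
      simp [Polynomial.algebraMap_eq, Polynomial.coeff_C_mul, Polynomial.coeff_X_pow]
    · intro b _ hb
      have hb' : (b : ℕ) ≠ 0 := fun h => hb (Fin.ext h)
      have : l₀ b = ⟨0, Nat.succ_pos k⟩ := by simp [hl₀, hb']
      simp [this, Polynomial.algebraMap_eq]
  · -- other l give coeff 0
    intro l hl hne
    rw [Finset.mem_filter] at hl
    apply Polynomial.coeff_eq_zero_of_natDegree_lt
    refine lt_of_le_of_lt (term_deg κ k l) ?_
    -- show ∑ l i < k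
    by_cases hall : ∀ i : Fin k, (i : ℕ) ≠ 0 → (l i : ℕ) = 0
    · exfalso
      apply hne
      funext i
      by_cases hi : (i : ℕ) = 0
      · have hieq : i = ⟨0, hk⟩ := Fin.ext hi
        have : ∑ j : Fin k, ((j : ℕ) + 1) * (l j : ℕ) = (l i : ℕ) := by
          rw [Finset.sum_eq_single i]
          · rw [hi]; ring
          · intro b _ hb
            rcases Nat.eq_zero_or_pos (b : ℕ) with hb0 | hb0
            · exact absurd (hieq ▸ Fin.ext hb0 : b = i) hb
            · rw [hall b (Nat.pos_iff_ne_zero.mp hb0), mul_zero]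
          · intro h; exact absurd (Finset.mem_univ i) h
        have hli : (l i : ℕ) = k := this.symm.trans hl.2
        exact Fin.ext (by simp [hl₀, hi, hli])
      · have := hall i hi
        exact Fin.ext (by simp [hl₀, hi, this])
    · push_neg at hall
      obtain ⟨i₀, hi₀ne, hli₀⟩ := hall
      calc ∑ i : Fin k, (l i : ℕ) < ∑ i : Fin k, ((i : ℕ) + 1) * (l i : ℕ) := by
            refine Finset.sum_lt_sum (fun i _ => Nat.le_mul_of_pos_left _ (Nat.succ_pos _)) ⟨i₀, Finset.mem_univ _, ?_⟩
            have h1 : 1 ≤ (i₀ : ℕ) := Nat.pos_iff_ne_zero.mpr hi₀ne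
            have h2 : 1 ≤ (l i₀ : ℕ) := Nat.pos_iff_ne_zero.mpr hli₀
            nlinarith
        _ = k := hl.2

lemma detB (n : ℕ) :
    (cDF (n+1) : ℂ) * Matrix.det (Matrix.of fun i j : Fin (n+1) =>
      if (j:ℕ) ≤ 2*(i:ℕ)+1 then (((2*(i:ℕ)+1-(j:ℕ)).factorial : ℂ))⁻¹ else 0) = 1 := by
  have hB : (Matrix.of fun i j : Fin (n+1) =>
      if (j:ℕ) ≤ 2*(i:ℕ)+1 then (((2*(i:ℕ)+1-(j:ℕ)).factorial : ℂ))⁻¹ else 0)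
      = Matrix.of fun i j : Fin (n+1) => (((2*(i:ℕ)+1).factorial : ℂ))⁻¹ *
          (((2*(i:ℕ)+1).descFactorial (j:ℕ) : ℕ) : ℂ) := by
    ext i j
    simp only [Matrix.of_apply]
    by_cases h : (j:ℕ) ≤ 2*(i:ℕ)+1
    · rw [if_pos h]
      have hd : ((2*(i:ℕ)+1) - (j:ℕ)).factorial * (2*(i:ℕ)+1).descFactorial (j:ℕ)
          = (2*(i:ℕ)+1).factorial := Nat.factorial_mul_descFactorial h
      have hf1 : (((2*(i:ℕ)+1-(j:ℕ)).factorial : ℂ)) ≠ 0 := Nat.cast_ne_zero.mpr (Nat.factorial_ne_zero _)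
      have hf2 : (((2*(i:ℕ)+1).factorial : ℂ)) ≠ 0 := Nat.cast_ne_zero.mpr (Nat.factorial_ne_zero _)
      field_simp
      exact_mod_cast congrArg (Nat.cast : ℕ → ℂ) hd.symm
    · rw [if_neg h, Nat.descFactorial_eq_zero_iff_lt.mpr (by omega), Nat.cast_zero, mul_zero]
  rw [hB]
  rw [show (Matrix.of fun i j : Fin (n+1) => (((2*(i:ℕ)+1).factorial : ℂ))⁻¹ *
          (((2*(i:ℕ)+1).descFactorial (j:ℕ) : ℕ) : ℂ))
      = Matrix.of (fun i j : Fin (n+1) => (fun r : Fin (n+1) => (((2*(r:ℕ)+1).factorial : ℂ))⁻¹) i *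
          (Matrix.of fun r c : Fin (n+1) => (((2*(r:ℕ)+1).descFactorial (c:ℕ) : ℕ) : ℂ)) i j) from rfl,
    Matrix.det_mul_column]
  have hC : (Matrix.of fun r c : Fin (n+1) => (((2*(r:ℕ)+1).descFactorial (c:ℕ) : ℕ) : ℂ))
      = Matrix.of fun r c : Fin (n+1) => (descPochhammer ℂ (c:ℕ)).eval (((2*(r:ℕ)+1 : ℕ) : ℂ)) := by
    ext r c
    simp only [Matrix.of_apply]
    exact (descPochhammer_eval_eq_descFactorial ℂ _ _).symm
  rw [hC, ← Matrix.det_eval_matrixOfPolynomials_eq_det_vandermonde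
      (fun r : Fin (n+1) => ((2*(r:ℕ)+1 : ℕ) : ℂ)) (fun c => descPochhammer ℂ (c:ℕ))
      (fun c => descPochhammer_natDegree ℂ (c:ℕ)) (fun c => monic_descPochhammer ℂ (c:ℕ))]
  rw [Matrix.det_vandermonde]
  have hsplit : (∏ i : Fin (n+1), ∏ j ∈ Finset.Ioi i,
        (((2*(j:ℕ)+1 : ℕ) : ℂ) - ((2*(i:ℕ)+1 : ℕ) : ℂ)))
      = (∏ i : Fin (n+1), (2:ℂ) ^ (Finset.Ioi i).card) *
          ∏ i : Fin (n+1), ∏ j ∈ Finset.Ioi i, (((j:ℕ) : ℂ) - ((i:ℕ) : ℂ)) := by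
    rw [← Finset.prod_mul_distrib]
    refine Finset.prod_congr rfl fun i _ => ?_
    rw [← Finset.prod_const, ← Finset.prod_mul_distrib]
    refine Finset.prod_congr rfl fun j _ => ?_
    push_cast
    ring
  have hvdm : (∏ i : Fin (n+1), ∏ j ∈ Finset.Ioi i, (((j:ℕ) : ℂ) - ((i:ℕ) : ℂ)))
      = (Nat.superFactorial n : ℂ) := by
    rw [← Matrix.det_vandermonde]
    exact Matrix.det_vandermonde_id_eq_superFactorial n
  have hE : ∑ i : Fin (n+1), (Finset.Ioi i).card = ∑ i ∈ Finset.range (n+1), i := by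
    have h1 : ∀ i : Fin (n+1), (Finset.Ioi i).card = n - (i:ℕ) := fun i => by
      rw [Fin.card_Ioi]; omega
    simp_rw [h1]
    rw [Fin.sum_univ_eq_sum_range (fun i => n - i) (n+1)]
    have := Finset.sum_range_reflect (fun j => j) (n+1)
    simpa using this
  have hkeyC : (cDF (n+1) : ℂ) * ((2:ℂ) ^ (∑ i ∈ Finset.range (n+1), i) *
      (Nat.superFactorial n : ℂ)) = ((∏ i ∈ Finset.range (n+1), (2*i+1).factorial : ℕ) : ℂ) := by
    rw [cDF, ← keyNat n]
    push_cast
    ring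
  rw [hsplit, hvdm, Finset.prod_pow_eq_pow_sum, hE]
  calc (cDF (n+1) : ℂ) * ((∏ i : Fin (n+1), (((2*(i:ℕ)+1).factorial : ℂ))⁻¹) *
          ((2:ℂ) ^ (∑ i ∈ Finset.range (n+1), i) * (Nat.superFactorial n : ℂ)))
      = (∏ i : Fin (n+1), (((2*(i:ℕ)+1).factorial : ℂ))⁻¹) *
          ((cDF (n+1) : ℂ) * ((2:ℂ) ^ (∑ i ∈ Finset.range (n+1), i) * (Nat.superFactorial n : ℂ))) := by
        ring
    _ = (∏ i : Fin (n+1), (((2*(i:ℕ)+1).factorial : ℂ))⁻¹) *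
          ∏ i : Fin (n+1), (((2*(i:ℕ)+1).factorial : ℂ)) := by
        rw [hkeyC, Nat.cast_prod, ← Fin.prod_univ_eq_prod_range (fun i => (((2*i+1).factorial : ℕ) : ℂ)) (n+1)]
    _ = 1 := by
        rw [← Finset.prod_mul_distrib]
        refine Finset.prod_eq_one fun i _ => ?_
        exact inv_mul_cancel₀ (Nat.cast_ne_zero.mpr (Nat.factorial_ne_zero _))


lemma natDegree_units_smul (u : ℤˣ) (p : Polynomial ℂ) : (u • p).natDegree = p.natDegree := by
  rcases Int.units_eq_one_or u with rfl | rfl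
  · rw [one_smul]
  · rw [Units.smul_def, Units.coe_neg_one, neg_smul, one_smul, Polynomial.natDegree_neg]

lemma AM_det_facts {n : ℕ} (κ : ℕ → ℂ) (M : Matrix (Fin (n+1)) (Fin (n+1)) (Polynomial ℂ))
    (hent : ∀ i j : Fin (n+1), (j:ℕ) ≤ 2*(i:ℕ)+1 → M i j = thetaPoly κ (2*(i:ℕ)+1 - (j:ℕ)))
    (hent0 : ∀ i j : Fin (n+1), ¬((j:ℕ) ≤ 2*(i:ℕ)+1) → M i j = 0) :
    (Matrix.det M).coeff (n+1 + ∑ i ∈ Finset.range (n+1), i) =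
      Matrix.det (Matrix.of fun i j : Fin (n+1) =>
        if (j:ℕ) ≤ 2*(i:ℕ)+1 then (((2*(i:ℕ)+1-(j:ℕ)).factorial : ℂ))⁻¹ else 0) ∧
    (Matrix.det M).natDegree ≤ n+1 + ∑ i ∈ Finset.range (n+1), i := by
  classical
  set D : ℕ := (n+1) + ∑ i ∈ Finset.range (n+1), i with hD
  have hdeg_ent : ∀ i j : Fin (n+1), (M i j).natDegree ≤ 2*(i:ℕ)+1 - (j:ℕ) := by
    intro i j
    by_cases h : (j:ℕ) ≤ 2*(i:ℕ)+1
    · rw [hent i j h]; exact thetaPoly_natDegree_le κ _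
    · rw [hent0 i j h]; simp
  have hfin : ∑ i : Fin (n+1), ((i:ℕ):ℤ) = ((∑ i ∈ Finset.range (n+1), i : ℕ) : ℤ) := by
    rw [Nat.cast_sum]
    exact Fin.sum_univ_eq_sum_range (fun i => ((i:ℤ))) (n+1)
  have hDsum : ∀ σ : Equiv.Perm (Fin (n+1)), (∀ i : Fin (n+1), (i:ℕ) ≤ 2*((σ i):ℕ)+1) →
      ∑ i : Fin (n+1), (2*((σ i):ℕ)+1 - (i:ℕ)) = D := by
    intro σ hσ
    apply Nat.cast_injective (R := ℤ)
    have hc : ((∑ i : Fin (n+1), (2*((σ i):ℕ)+1 - (i:ℕ)) : ℕ) : ℤ)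
        = ∑ i : Fin (n+1), (2*(((σ i):ℕ):ℤ) + 1 - ((i:ℕ):ℤ)) := by
      rw [Nat.cast_sum]
      exact Finset.sum_congr rfl fun i _ => by have := hσ i; push_cast; omega
    have hp : ∑ i : Fin (n+1), (((σ i):ℕ):ℤ) = ∑ i : Fin (n+1), ((i:ℕ):ℤ) :=
      Equiv.sum_comp σ (fun i => ((i:ℕ):ℤ))
    have expand : ∑ i : Fin (n+1), (2*(((σ i):ℕ):ℤ) + 1 - ((i:ℕ):ℤ))
        = 2*(∑ i : Fin (n+1), (((σ i):ℕ):ℤ)) + (n+1) - ∑ i : Fin (n+1), ((i:ℕ):ℤ) := by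
      rw [Finset.sum_sub_distrib, Finset.sum_add_distrib, ← Finset.mul_sum,
        Finset.sum_const, Finset.card_univ, Fintype.card_fin]
      push_cast
      ring
    rw [hc, expand, hp, hfin, hD]
    push_cast
    ring
  constructor
  · rw [Matrix.det_apply, Matrix.det_apply, Polynomial.finset_sum_coeff]
    refine Finset.sum_congr rfl fun σ _ => ?_
    rw [Polynomial.coeff_smul]
    congr 1
    by_cases hgood : ∀ i : Fin (n+1), (i:ℕ) ≤ 2*((σ i):ℕ)+1
    · rw [← hDsum σ hgood,
        coeff_prod_varying Finset.univ (fun i => M (σ i) i) (fun i => 2*((σ i):ℕ)+1 - (i:ℕ))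
          (fun i _ => hdeg_ent (σ i) i)]
      refine Finset.prod_congr rfl fun i _ => ?_
      rw [hent (σ i) i (hgood i), thetaPoly_coeff, Matrix.of_apply, if_pos (hgood i)]
    · push_neg at hgood
      obtain ⟨i0, hi0⟩ := hgood
      have hz1 : (∏ i : Fin (n+1), M (σ i) i) = 0 :=
        Finset.prod_eq_zero (f := fun i => M (σ i) i) (Finset.mem_univ i0)
          (hent0 (σ i0) i0 (by omega))
      have hz2 : (∏ i : Fin (n+1), (Matrix.of fun r c : Fin (n+1) =>
          if (c:ℕ) ≤ 2*(r:ℕ)+1 then (((2*(r:ℕ)+1-(c:ℕ)).factorial : ℂ))⁻¹ else 0) (σ i) i) = 0 := by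
        apply Finset.prod_eq_zero (Finset.mem_univ i0)
        rw [Matrix.of_apply, if_neg (by omega)]
      rw [hz1, hz2, Polynomial.coeff_zero]
  · rw [Matrix.det_apply]
    refine Polynomial.natDegree_sum_le_of_forall_le _ _ fun σ _ => ?_
    rw [natDegree_units_smul]
    by_cases hgood : ∀ i : Fin (n+1), (i:ℕ) ≤ 2*((σ i):ℕ)+1
    · refine (Polynomial.natDegree_prod_le _ _).trans ?_
      calc ∑ i : Fin (n+1), (M (σ i) i).natDegree
          ≤ ∑ i : Fin (n+1), (2*((σ i):ℕ)+1 - (i:ℕ)) :=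
            Finset.sum_le_sum fun i _ => hdeg_ent (σ i) i
        _ = D := hDsum σ hgood
    · push_neg at hgood
      obtain ⟨i0, hi0⟩ := hgood
      have hz1 : (∏ i : Fin (n+1), M (σ i) i) = 0 :=
        Finset.prod_eq_zero (f := fun i => M (σ i) i) (Finset.mem_univ i0)
          (hent0 (σ i0) i0 (by omega))
      rw [hz1, Polynomial.natDegree_zero]
      exact Nat.zero_le _

end AMaux

/-- for every `N ≥ 1` and any constants `κ_j`, the Adler–Moser polynomial
`Θ_N` is monic of degree `N(N+1)/2`. -/
theorem adlerMoser_monic_degree (N : ℕ) (hN : 1 ≤ N) (κ : ℕ → ℂ) :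
    (adlerMoserPoly κ N).Monic ∧ (adlerMoserPoly κ N).natDegree = N * (N + 1) / 2 := by
  obtain ⟨n, rfl⟩ := Nat.exists_eq_succ_of_ne_zero (Nat.one_le_iff_ne_zero.mp hN)
  have hent : ∀ i j : Fin (n+1), (j:ℕ) ≤ 2*(i:ℕ)+1 →
      (Matrix.of fun i j : Fin (n+1) => thetaPolyZ κ (2 * (i : ℤ) + 1 - (j : ℤ))) i j
        = thetaPoly κ (2*(i:ℕ)+1 - (j:ℕ)) := by
    intro i j h
    rw [Matrix.of_apply, thetaPolyZ, if_pos (by omega : (0:ℤ) ≤ 2*(i:ℤ)+1-(j:ℤ))]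
    congr 1
    omega
  have hent0 : ∀ i j : Fin (n+1), ¬((j:ℕ) ≤ 2*(i:ℕ)+1) →
      (Matrix.of fun i j : Fin (n+1) => thetaPolyZ κ (2 * (i : ℤ) + 1 - (j : ℤ))) i j = 0 := by
    intro i j h
    rw [Matrix.of_apply, thetaPolyZ, if_neg (by omega)]
  obtain ⟨hcoeff_det, hdeg_det⟩ := AM_det_facts κ _ hent hent0
  set D : ℕ := (n+1) + ∑ i ∈ Finset.range (n+1), i with hD
  have hcoeffD : (adlerMoserPoly κ (n+1)).coeff D = 1 := by
    rw [adlerMoserPoly, Polynomial.coeff_C_mul, hcoeff_det]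
    exact detB n
  have hdegle : (adlerMoserPoly κ (n+1)).natDegree ≤ D := by
    rw [adlerMoserPoly]
    refine Polynomial.natDegree_mul_le.trans ?_
    rw [Polynomial.natDegree_C, zero_add]
    exact hdeg_det
  have hmonic := Polynomial.monic_of_natDegree_le_of_coeff_eq_one D hdegle hcoeffD
  have hge : D ≤ (adlerMoserPoly κ (n+1)).natDegree :=
    Polynomial.le_natDegree_of_ne_zero (by rw [hcoeffD]; exact one_ne_zero)
  refine ⟨hmonic, ?_⟩
  rw [le_antisymm hdegle hge]
  have hs : (∑ i ∈ Finset.range (n+1), i) * 2 = (n+1)*n := Finset.sum_range_id_mul_two (n+1)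
  have h2 : (n+1) * ((n+1)+1) = D * 2 := by
    rw [hD, Nat.add_mul (n+1) _ 2, hs]
    ring
  exact (Nat.div_eq_of_eq_mul_left (by norm_num) h2).symm
end

section
/- Let N ≥ 1 and let x^+ = (x_1^+, x_2^+, ...), x^− = (x_1^−, x_2^−, ...), and s = (s_1, s_2, ...) be arbitrary complex sequences. Set m_{i,j} = Σ_{v=0}^{min(i,j)} 4^{−v} S_{i−v}(x^+ + v s) S_{j−v}(x^− + v s). Then det_{1≤i,j≤N}[ m_{2i−1, 2j−1} ] = Σ_{0 ≤ v_1 < v_2 < ⋯ < v_N ≤ 2N−1} det_{1≤i,j≤N}[ 2^{−v_j} S_{2i−1−v_j}(x^+ + v_j s) ] · det_{1≤i,j≤N}[ 2^{−v_j} S_{2i−1−v_j}(x^− + v_j s) ]. -/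
open scoped BigOperators

open Finset in
private lemma cauchyBinetAux {N M : ℕ} (A B : Matrix (Fin N) (Fin M) ℂ) :
    Matrix.det (Matrix.of fun i j => ∑ k : Fin M, A i k * B j k) =
    ∑ v ∈ @Finset.filter (Fin N → Fin M) (fun v => StrictMono v)
        (Classical.decPred _) Finset.univ,
      Matrix.det (Matrix.of fun i j => A i (v j)) *
      Matrix.det (Matrix.of fun i j => B i (v j)) := by
  classical
  rw [Finset.filter_congr_decidable]
  have hdet : Matrix.det (Matrix.of fun i j => ∑ k : Fin M, A i k * B j k)
      = ∑ f : Fin N → Fin M, (∏ i, A i (f i)) *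
          Matrix.det (Matrix.of fun i j => B j (f i)) := by
    have h1 : (Matrix.of fun i j => ∑ k : Fin M, A i k * B j k)
        = fun i => ∑ k : Fin M, A i k • (fun j => B j k) := by
      funext i j
      simp [Finset.sum_apply]
    have h2 := MultilinearMap.map_sum
      (f := (Matrix.detRowAlternating : (Fin N → ℂ) [⋀^Fin N]→ₗ[ℂ] ℂ).toMultilinearMap)
      (g := fun (i : Fin N) (k : Fin M) => A i k • fun j => B j k)
    have h3 : ∀ f : Fin N → Fin M,
        ((Matrix.detRowAlternating : (Fin N → ℂ) [⋀^Fin N]→ₗ[ℂ] ℂ).toMultilinearMap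
            fun i => A i (f i) • fun j => B j (f i))
          = (∏ i, A i (f i)) * Matrix.det (Matrix.of fun i j => B j (f i)) := by
      intro f
      rw [MultilinearMap.map_smul_univ, smul_eq_mul]
      rfl
    calc Matrix.det (Matrix.of fun i j => ∑ k : Fin M, A i k * B j k)
        = ((Matrix.detRowAlternating : (Fin N → ℂ) [⋀^Fin N]→ₗ[ℂ] ℂ).toMultilinearMap
            fun i => ∑ k : Fin M, A i k • fun j => B j k) := by
          exact congrArg _ h1
      _ = ∑ f : Fin N → Fin M,
            ((Matrix.detRowAlternating : (Fin N → ℂ) [⋀^Fin N]→ₗ[ℂ] ℂ).toMultilinearMap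
              fun i => A i (f i) • fun j => B j (f i)) := h2
      _ = _ := Finset.sum_congr rfl fun f _ => h3 f
  rw [hdet, ← Finset.sum_filter_add_sum_filter_not Finset.univ (fun f => Function.Injective f)]
  have hzero : ∑ f ∈ filter (fun f : Fin N → Fin M => ¬ Function.Injective f) univ,
      (∏ i, A i (f i)) * Matrix.det (Matrix.of fun i j => B j (f i)) = 0 := by
    refine Finset.sum_eq_zero fun f hf => ?_
    simp only [mem_filter, Function.Injective, not_forall] at hf
    obtain ⟨i1, i2, heq, hne⟩ := hf.2
    rw [Matrix.det_zero_of_row_eq hne (by funext j; simp [Matrix.of_apply, heq]), mul_zero]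
  rw [hzero, add_zero]
  have hbij : ∑ f ∈ filter (fun f : Fin N → Fin M => Function.Injective f) univ,
      (∏ i, A i (f i)) * Matrix.det (Matrix.of fun i j => B j (f i))
    = ∑ p ∈ (filter (fun v : Fin N → Fin M => StrictMono v) univ) ×ˢ
        (univ : Finset (Equiv.Perm (Fin N))),
        (∏ i, A i (p.1 (p.2 i))) * Matrix.det (Matrix.of fun i j => B j (p.1 (p.2 i))) := by
    refine Finset.sum_bij' (fun f _ => (f ∘ Tuple.sort f, (Tuple.sort f)⁻¹))
      (fun p _ => p.1 ∘ p.2) ?_ ?_ ?_ ?_ ?_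
    · intro f hf
      simp only [mem_filter, mem_univ, true_and] at hf
      rw [Finset.mem_product]
      refine ⟨Finset.mem_filter.mpr ⟨Finset.mem_univ _, ?_⟩, Finset.mem_univ _⟩
      exact (Tuple.monotone_sort f).strictMono_of_injective
        (hf.comp (Tuple.sort f).injective)
    · intro p hp
      rw [Finset.mem_product] at hp
      have hsm := (Finset.mem_filter.mp hp.1).2
      simp only [mem_filter, mem_univ, true_and]
      exact hsm.injective.comp p.2.injective
    · intro f hf
      funext i
      simp
    · intro p hp
      rw [Finset.mem_product] at hp
      have hsm := (Finset.mem_filter.mp hp.1).2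
      have hinj : Function.Injective (p.1 ∘ ⇑p.2) := hsm.injective.comp p.2.injective
      have hmono1 : Monotone ((p.1 ∘ ⇑p.2) ∘ ⇑(p.2)⁻¹) := by
        have h : (p.1 ∘ ⇑p.2) ∘ ⇑(p.2)⁻¹ = p.1 := by
          funext i; simp
        rw [h]; exact hsm.monotone
      have huniq := Tuple.unique_monotone (f := p.1 ∘ ⇑p.2) (σ := (p.2)⁻¹)
        (τ := Tuple.sort (p.1 ∘ ⇑p.2)) hmono1 (Tuple.monotone_sort _)
      have hv : (p.1 ∘ ⇑p.2) ∘ ⇑(Tuple.sort (p.1 ∘ ⇑p.2)) = p.1 := by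
        rw [← huniq]; funext i; simp
      have hσ : (Tuple.sort (p.1 ∘ ⇑p.2))⁻¹ = p.2 := by
        have h : Tuple.sort (p.1 ∘ ⇑p.2) = (p.2)⁻¹ := by
          apply Equiv.ext
          intro i
          apply hinj
          have h2 := congrFun huniq i
          simpa using h2.symm
        rw [h, inv_inv]
      exact Prod.ext hv hσ
    · intro f hf
      simp only [Function.comp_apply, Equiv.Perm.coe_inv, Equiv.apply_symm_apply]
  rw [hbij, Finset.sum_product]
  refine Finset.sum_congr rfl fun v hv => ?_
  have hsm := (Finset.mem_filter.mp hv).2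
  have hBperm : ∀ σ : Equiv.Perm (Fin N),
      Matrix.det (Matrix.of fun i j => B j (v (σ i)))
        = (Equiv.Perm.sign σ : ℂ) * Matrix.det (Matrix.of fun i j => B j (v i)) :=
    fun σ => Matrix.det_permute σ (Matrix.of fun i j => B j (v i))
  calc (∑ σ : Equiv.Perm (Fin N),
        (∏ i, A i (v (σ i))) * Matrix.det (Matrix.of fun i j => B j (v (σ i))))
      = ∑ σ : Equiv.Perm (Fin N), ((Equiv.Perm.sign σ : ℂ) * ∏ i, A i (v (σ i))) *
          Matrix.det (Matrix.of fun i j => B j (v i)) := by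
        refine Finset.sum_congr rfl fun σ _ => ?_
        rw [hBperm σ]; ring
    _ = (∑ σ : Equiv.Perm (Fin N), (Equiv.Perm.sign σ : ℂ) * ∏ i, A i (v (σ i))) *
          Matrix.det (Matrix.of fun i j => B j (v i)) := by rw [Finset.sum_mul]
    _ = Matrix.det (Matrix.of fun i j => A i (v j)) *
          Matrix.det (Matrix.of fun i j => B i (v j)) := by
        congr 1
        · rw [← Matrix.det_transpose (Matrix.of fun i j => A i (v j)), Matrix.det_apply']
          rfl
        · rw [← Matrix.det_transpose (Matrix.of fun i j => B i (v j))]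
          rfl

private lemma mGen_eq_sum {N : ℕ} (xp xm s : ℕ → ℂ) (i j : Fin N) :
    mGen xp xm s (2 * (i : ℕ) + 1) (2 * (j : ℕ) + 1)
      = ∑ k : Fin (2 * N),
        ((((2 : ℂ) ^ (k : ℕ))⁻¹ *
            schurZ (fun m => xp m + ((k : ℕ) : ℂ) * s m) (2 * (i : ℤ) + 1 - ((k : ℕ) : ℤ))) *
         (((2 : ℂ) ^ (k : ℕ))⁻¹ *
            schurZ (fun m => xm m + ((k : ℕ) : ℂ) * s m) (2 * (j : ℤ) + 1 - ((k : ℕ) : ℤ)))) := by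
  set g : ℕ → ℂ := fun v =>
    (((2 : ℂ) ^ v)⁻¹ * schurZ (fun m => xp m + (v : ℂ) * s m) (2 * (i : ℤ) + 1 - (v : ℤ))) *
    (((2 : ℂ) ^ v)⁻¹ * schurZ (fun m => xm m + (v : ℂ) * s m) (2 * (j : ℤ) + 1 - (v : ℤ)))
    with hg
  have h1 : mGen xp xm s (2 * (i : ℕ) + 1) (2 * (j : ℕ) + 1)
      = ∑ v ∈ Finset.range (min (2 * (i : ℕ) + 1) (2 * (j : ℕ) + 1) + 1), g v := by
    unfold mGen
    refine Finset.sum_congr rfl fun v hv => ?_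
    rw [Finset.mem_range] at hv
    have hvi : v ≤ 2 * (i : ℕ) + 1 := by omega
    have hvj : v ≤ 2 * (j : ℕ) + 1 := by omega
    have hzi : schurZ (fun m => xp m + (v : ℂ) * s m) (2 * (i : ℤ) + 1 - (v : ℤ))
        = schurC (fun m => xp m + (v : ℂ) * s m) (2 * (i : ℕ) + 1 - v) := by
      rw [schurZ, if_pos (by omega)]
      congr 1
      omega
    have hzj : schurZ (fun m => xm m + (v : ℂ) * s m) (2 * (j : ℤ) + 1 - (v : ℤ))
        = schurC (fun m => xm m + (v : ℂ) * s m) (2 * (j : ℕ) + 1 - v) := by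
      rw [schurZ, if_pos (by omega)]
      congr 1
      omega
    have h4 : ((4 : ℂ) ^ v)⁻¹ = ((2 : ℂ) ^ v)⁻¹ * ((2 : ℂ) ^ v)⁻¹ := by
      rw [← mul_inv, ← mul_pow]
      norm_num
    rw [hg]
    simp only [hzi, hzj, h4]
    ring
  have h2 : ∑ v ∈ Finset.range (min (2 * (i : ℕ) + 1) (2 * (j : ℕ) + 1) + 1), g v
      = ∑ v ∈ Finset.range (2 * N), g v := by
    refine Finset.sum_subset
      (Finset.range_subset_range.mpr (by have := i.isLt; have := j.isLt; omega)) ?_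
    intro v hv hv'
    rw [Finset.mem_range] at hv hv'
    push_neg at hv'
    rcases le_or_gt v (2 * (i : ℕ) + 1) with hvi | hvi
    · have hz : schurZ (fun m => xm m + (v : ℂ) * s m) (2 * (j : ℤ) + 1 - (v : ℤ)) = 0 := by
        rw [schurZ, if_neg (by omega)]
      rw [hg]
      simp only [hz, mul_zero]
    · have hz : schurZ (fun m => xp m + (v : ℂ) * s m) (2 * (i : ℤ) + 1 - (v : ℤ)) = 0 := by
        rw [schurZ, if_neg (by omega)]
      rw [hg]
      simp only [hz, mul_zero, zero_mul]
  rw [h1, h2, ← Fin.sum_univ_eq_sum_range g (2 * N)]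


/-- Laplace (Cauchy–Binet) expansion of `det[m_{2i-1,2j-1}]` into sums over
`0 ≤ v₁ < ⋯ < v_N ≤ 2N-1` of products of two determinants. -/
theorem tau_laplace_expansion (N : ℕ) (hN : 1 ≤ N) (xp xm s : ℕ → ℂ) :
    Matrix.det (Matrix.of fun i j : Fin N =>
        mGen xp xm s (2 * (i : ℕ) + 1) (2 * (j : ℕ) + 1)) =
      ∑ v ∈ @Finset.filter (Fin N → Fin (2 * N)) (fun v => StrictMono v)
          (Classical.decPred _) Finset.univ,
        Matrix.det (Matrix.of fun i j : Fin N =>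
          ((2 : ℂ) ^ (v j : ℕ))⁻¹ *
            schurZ (fun m => xp m + ((v j : ℕ) : ℂ) * s m)
              (2 * (i : ℤ) + 1 - ((v j : ℕ) : ℤ))) *
        Matrix.det (Matrix.of fun i j : Fin N =>
          ((2 : ℂ) ^ (v j : ℕ))⁻¹ *
            schurZ (fun m => xm m + ((v j : ℕ) : ℂ) * s m)
              (2 * (i : ℤ) + 1 - ((v j : ℕ) : ℤ))) := by
  have h := cauchyBinetAux
    (A := fun (i : Fin N) (k : Fin (2 * N)) => ((2 : ℂ) ^ (k : ℕ))⁻¹ *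
      schurZ (fun m => xp m + ((k : ℕ) : ℂ) * s m) (2 * (i : ℤ) + 1 - ((k : ℕ) : ℤ)))
    (B := fun (j : Fin N) (k : Fin (2 * N)) => ((2 : ℂ) ^ (k : ℕ))⁻¹ *
      schurZ (fun m => xm m + ((k : ℕ) : ℂ) * s m) (2 * (j : ℤ) + 1 - ((k : ℕ) : ℤ)))
  rw [show (Matrix.of fun i j : Fin N => mGen xp xm s (2 * (i : ℕ) + 1) (2 * (j : ℕ) + 1))
      = (Matrix.of fun i j : Fin N => ∑ k : Fin (2 * N),
          (((2 : ℂ) ^ (k : ℕ))⁻¹ *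
            schurZ (fun m => xp m + ((k : ℕ) : ℂ) * s m) (2 * (i : ℤ) + 1 - ((k : ℕ) : ℤ))) *
          (((2 : ℂ) ^ (k : ℕ))⁻¹ *
            schurZ (fun m => xm m + ((k : ℕ) : ℂ) * s m) (2 * (j : ℤ) + 1 - ((k : ℕ) : ℤ))))
      from by
        funext i j
        exact mGen_eq_sum xp xm s i j]
  exact h
end
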